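/- Let X and Y be real Hilbert spaces, let A : X → X, C : X → Y and K : Y → X be bounded linear operators, let T > 0 and γ₀ > 0. Assume that ‖exp(tA)‖ ≤ 1 for all t ∈ [0,T] and that for every x ∈ X one has ∫₀^T ‖C (exp(tA) x)‖²_Y dt ≥ γ₀² ‖x‖²_X. Then for every x ∈ X, ∫₀^T ‖C (exp(t(A − K∘C)) x)‖²_Y dt ≥ γ² ‖x‖²_X, where γ = γ₀·√2 / (√2 + T·‖C‖·‖K‖). -/

import Mathlib

open MeasureTheory NormedSpace

set_option maxHeartbeats 1000000
set_option synthInstance.maxHeartbeats 200000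

/-- Cauchy–Schwarz inequality for interval integrals of continuous functions. -/
lemma interval_cauchy_schwarz (f g : ℝ → ℝ) (hf : Continuous f) (hg : Continuous g)
    (b : ℝ) (hb : 0 ≤ b) :
    (∫ t in (0:ℝ)..b, f t * g t) ^ 2 ≤
      (∫ t in (0:ℝ)..b, f t ^ 2) * (∫ t in (0:ℝ)..b, g t ^ 2) := by
  have If2 : IntervalIntegrable (fun t => f t ^ 2) volume 0 b :=
    (hf.pow 2).intervalIntegrable 0 b
  have Ig2 : IntervalIntegrable (fun t => g t ^ 2) volume 0 b :=
    (hg.pow 2).intervalIntegrable 0 b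
  have Ifg : IntervalIntegrable (fun t => f t * g t) volume 0 b :=
    (hf.mul hg).intervalIntegrable 0 b
  set P := ∫ t in (0:ℝ)..b, f t ^ 2 with hP
  set R := ∫ t in (0:ℝ)..b, f t * g t with hR
  set Q := ∫ t in (0:ℝ)..b, g t ^ 2 with hQ
  have key : ∀ lam : ℝ, 0 ≤ P * (lam * lam) + (-2 * R) * lam + Q := by
    intro lam
    have hnn : 0 ≤ ∫ t in (0:ℝ)..b, (lam * f t - g t) ^ 2 :=
      intervalIntegral.integral_nonneg hb (fun u _ => sq_nonneg _)
    have hexp : (∫ t in (0:ℝ)..b, (lam * f t - g t) ^ 2)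
        = lam ^ 2 * P - 2 * lam * R + Q := by
      have hpt : ∀ t : ℝ, (lam * f t - g t) ^ 2
          = lam ^ 2 * f t ^ 2 - 2 * lam * (f t * g t) + g t ^ 2 := by
        intro t; ring
      simp_rw [hpt]
      rw [intervalIntegral.integral_add ((If2.const_mul _).sub (Ifg.const_mul _)) Ig2,
        intervalIntegral.integral_sub (If2.const_mul _) (Ifg.const_mul _),
        intervalIntegral.integral_const_mul, intervalIntegral.integral_const_mul]
    rw [hexp] at hnn
    nlinarith [hnn]
  have hd := discrim_le_zero key
  rw [discrim] at hd
  nlinarith [hd]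

/-- Lemma 2.1: preservation of exact observability under bounded output feedback. -/
theorem stmt_0
    {X : Type*} [NormedAddCommGroup X] [InnerProductSpace ℝ X] [CompleteSpace X]
    {Y : Type*} [NormedAddCommGroup Y] [InnerProductSpace ℝ Y] [CompleteSpace Y]
    (A : X →L[ℝ] X) (C : X →L[ℝ] Y) (K : Y →L[ℝ] X)
    (T γ₀ : ℝ) (hT : 0 < T) (hγ₀ : 0 < γ₀)
    (hcontr : ∀ t ∈ Set.Icc (0 : ℝ) T, ‖exp (t • A)‖ ≤ 1)
    (hobs : ∀ x : X, γ₀ ^ 2 * ‖x‖ ^ 2 ≤ ∫ t in (0 : ℝ)..T, ‖C (exp (t • A) x)‖ ^ 2) :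
    ∀ x : X,
      (γ₀ * Real.sqrt 2 / (Real.sqrt 2 + T * ‖C‖ * ‖K‖)) ^ 2 * ‖x‖ ^ 2 ≤
        ∫ t in (0 : ℝ)..T, ‖C (exp (t • (A - K ∘L C)) x)‖ ^ 2 := by
  intro x
  letI : NormedAlgebra ℚ (X →L[ℝ] X) := NormedAlgebra.restrictScalars ℚ ℝ _
  set B : X →L[ℝ] X := A - K ∘L C with hB
  have hzc : Continuous fun s : ℝ => exp (s • B) x :=
    ((exp_continuous (𝔸 := X →L[ℝ] X)).comp
      (continuous_id.smul continuous_const)).clm_apply continuous_const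
  set a : ℝ → ℝ := fun s => ‖C (exp (s • B) x)‖ with ha
  have hac : Continuous a := (C.continuous.comp hzc).norm
  have ha_nn : ∀ s, 0 ≤ a s := fun s => norm_nonneg _
  set M : ℝ := ‖C‖ * ‖K‖ with hM
  have hM0 : 0 ≤ M := mul_nonneg (norm_nonneg _) (norm_nonneg _)
  have hIa2T : IntervalIntegrable (fun s => a s ^ 2) volume 0 T :=
    (hac.pow 2).intervalIntegrable 0 T
  have hF2nn : 0 ≤ ∫ s in (0:ℝ)..T, a s ^ 2 :=
    intervalIntegral.integral_nonneg hT.le (fun u _ => sq_nonneg _)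
  set F : ℝ := Real.sqrt (∫ s in (0:ℝ)..T, a s ^ 2) with hF
  have hFnn : 0 ≤ F := Real.sqrt_nonneg _
  have hF2 : F ^ 2 = ∫ s in (0:ℝ)..T, a s ^ 2 := Real.sq_sqrt hF2nn
  -- Duhamel formula
  have key : ∀ t : ℝ, exp (t • A) x
      = exp (t • B) x
        + ∫ s in (0:ℝ)..t, exp ((t - s) • A) (K (C (exp (s • B) x))) := by
    intro t
    have hderiv : ∀ s : ℝ,
        HasDerivAt (fun u : ℝ => exp ((t - u) • A) (exp (u • B) x))
          (-(exp ((t - s) • A) (K (C (exp (s • B) x))))) s := by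
      intro s
      have h1 : HasDerivAt (fun u : ℝ => exp ((t - u) • A))
          (-(exp ((t - s) • A) * A)) s :=
        HasDerivAt.comp_const_sub t s (hasDerivAt_exp_smul_const (𝕂 := ℝ) A (t - s))
      have h2 : HasDerivAt (fun u : ℝ => exp (u • B) x)
          ((exp (s • B) * B) x) s := by
        simpa using (hasDerivAt_exp_smul_const (𝕂 := ℝ) B s).clm_apply (hasDerivAt_const s x)
      have h3 := h1.clm_apply h2
      have hc : exp (s • B) * B = B * exp (s • B) :=
        ((((Commute.refl B).smul_right s).exp_right).eq).symm
      rw [hc] at h3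
      have heq : (-(exp ((t - s) • A) * A)) (exp (s • B) x)
            + exp ((t - s) • A) ((B * exp (s • B)) x)
          = -(exp ((t - s) • A) (K (C (exp (s • B) x)))) := by
        simp only [ContinuousLinearMap.neg_apply, ContinuousLinearMap.mul_apply, hB,
          ContinuousLinearMap.sub_apply, ContinuousLinearMap.comp_apply, map_sub, map_neg]
        abel
      rw [heq] at h3
      exact h3
    have hcont' : Continuous fun s : ℝ =>
        -(exp ((t - s) • A) (K (C (exp (s • B) x)))) := by
      have hE : Continuous fun s : ℝ => exp ((t - s) • A) :=
        (exp_continuous (𝔸 := X →L[ℝ] X)).comp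
          ((continuous_const.sub continuous_id).smul continuous_const)
      exact (hE.clm_apply (K.continuous.comp (C.continuous.comp hzc))).neg
    have hint : IntervalIntegrable
        (fun s : ℝ => -(exp ((t - s) • A) (K (C (exp (s • B) x)))))
        volume 0 t := hcont'.intervalIntegrable 0 t
    have hftc := intervalIntegral.integral_eq_sub_of_hasDerivAt
      (f := fun u : ℝ => exp ((t - u) • A) (exp (u • B) x))
      (fun s _ => hderiv s) hint
    simp only [intervalIntegral.integral_neg, sub_self, zero_smul, exp_zero, sub_zero,
      ContinuousLinearMap.one_apply] at hftc
    have h4 : (∫ s in (0:ℝ)..t, exp ((t - s) • A) (K (C (exp (s • B) x))))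
        = exp (t • A) x - exp (t • B) x := by
      have h5 := neg_eq_iff_eq_neg.mp hftc
      rw [h5, neg_sub]
    rw [h4]; abel
  -- continuity of the integrand in Duhamel's formula
  have hEKc : ∀ t : ℝ, Continuous fun s : ℝ =>
      exp ((t - s) • A) (K (C (exp (s • B) x))) := by
    intro t
    exact ((exp_continuous (𝔸 := X →L[ℝ] X)).comp
      ((continuous_const.sub continuous_id).smul continuous_const)).clm_apply
      (K.continuous.comp (C.continuous.comp hzc))
  -- ∫₀ᵗ a ≤ √t * F for t ∈ [0, T]
  have hCSa : ∀ t ∈ Set.Icc (0:ℝ) T, (∫ s in (0:ℝ)..t, a s) ≤ Real.sqrt t * F := by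
    intro t ht
    have h1 := interval_cauchy_schwarz (fun _ => (1:ℝ)) a continuous_const hac t ht.1
    simp only [one_mul, one_pow] at h1
    have hone : (∫ _ in (0:ℝ)..t, (1:ℝ)) = t := by simp
    rw [hone] at h1
    have h2 : (∫ s in (0:ℝ)..t, a s ^ 2) ≤ ∫ s in (0:ℝ)..T, a s ^ 2 :=
      intervalIntegral.integral_mono_interval le_rfl ht.1 ht.2
        (Filter.Eventually.of_forall fun u => sq_nonneg _) hIa2T
    have h3 : (∫ s in (0:ℝ)..t, a s) ^ 2 ≤ t * F ^ 2 := by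
      rw [hF2]
      exact h1.trans (mul_le_mul_of_nonneg_left h2 ht.1)
    have hnn : 0 ≤ ∫ s in (0:ℝ)..t, a s :=
      intervalIntegral.integral_nonneg ht.1 (fun u _ => ha_nn u)
    calc (∫ s in (0:ℝ)..t, a s) = Real.sqrt ((∫ s in (0:ℝ)..t, a s) ^ 2) :=
          (Real.sqrt_sq hnn).symm
      _ ≤ Real.sqrt (t * F ^ 2) := Real.sqrt_le_sqrt h3
      _ = Real.sqrt t * F := by rw [Real.sqrt_mul ht.1, Real.sqrt_sq hFnn]
  -- pointwise bound on the original output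
  have hbd : ∀ t ∈ Set.Icc (0:ℝ) T,
      ‖C (exp (t • A) x)‖ ≤ a t + M * (Real.sqrt t * F) := by
    intro t ht
    rw [key t]
    have hInorm : ‖∫ s in (0:ℝ)..t, exp ((t - s) • A) (K (C (exp (s • B) x)))‖
        ≤ ∫ s in (0:ℝ)..t, ‖K‖ * a s := by
      refine le_trans (intervalIntegral.norm_integral_le_integral_norm ht.1) ?_
      refine intervalIntegral.integral_mono_on ht.1
        ((hEKc t).norm.intervalIntegrable 0 t)
        ((continuous_const.mul hac).intervalIntegrable 0 t) ?_
      intro s hs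
      calc ‖exp ((t - s) • A) (K (C (exp (s • B) x)))‖
          ≤ ‖exp ((t - s) • A)‖ * ‖K (C (exp (s • B) x))‖ :=
            ContinuousLinearMap.le_opNorm _ _
        _ ≤ 1 * (‖K‖ * a s) := by
            refine mul_le_mul ?_ ?_ (norm_nonneg _) zero_le_one
            · exact hcontr (t - s) ⟨sub_nonneg.mpr hs.2, by linarith [ht.2, hs.1]⟩
            · exact K.le_opNorm _
        _ = ‖K‖ * a s := one_mul _
    calc ‖C (exp (t • B) x
            + ∫ s in (0:ℝ)..t, exp ((t - s) • A) (K (C (exp (s • B) x))))‖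
        ≤ ‖C (exp (t • B) x)‖
          + ‖C (∫ s in (0:ℝ)..t, exp ((t - s) • A) (K (C (exp (s • B) x))))‖ := by
          rw [map_add]; exact norm_add_le _ _
      _ ≤ a t + ‖C‖ * ‖∫ s in (0:ℝ)..t, exp ((t - s) • A) (K (C (exp (s • B) x)))‖ :=
          add_le_add_right (C.le_opNorm _) _
      _ ≤ a t + ‖C‖ * ∫ s in (0:ℝ)..t, ‖K‖ * a s :=
          add_le_add_right (mul_le_mul_of_nonneg_left hInorm (norm_nonneg _)) _
      _ = a t + M * ∫ s in (0:ℝ)..t, a s := by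
          rw [intervalIntegral.integral_const_mul, hM, mul_assoc]
      _ ≤ a t + M * (Real.sqrt t * F) :=
          add_le_add_right (mul_le_mul_of_nonneg_left (hCSa t ht) hM0) _
  -- integrate the squared bound
  have hsqc : Continuous fun t : ℝ => (a t + M * (Real.sqrt t * F)) ^ 2 :=
    (hac.add (continuous_const.mul (Real.continuous_sqrt.mul continuous_const))).pow 2
  have hwcont : Continuous fun t : ℝ => ‖C (exp (t • A) x)‖ ^ 2 := by
    have hcw : Continuous fun t : ℝ => exp (t • A) x :=
      ((exp_continuous (𝔸 := X →L[ℝ] X)).comp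
        (continuous_id.smul continuous_const)).clm_apply continuous_const
    exact ((C.continuous.comp hcw).norm).pow 2
  have hint2 : (∫ t in (0:ℝ)..T, ‖C (exp (t • A) x)‖ ^ 2)
      ≤ ∫ t in (0:ℝ)..T, (a t + M * (Real.sqrt t * F)) ^ 2 := by
    refine intervalIntegral.integral_mono_on hT.le
      (hwcont.intervalIntegrable 0 T) (hsqc.intervalIntegrable 0 T) ?_
    intro t ht
    have h := hbd t ht
    have h0 : (0:ℝ) ≤ ‖C (exp (t • A) x)‖ := norm_nonneg _
    nlinarith [h, h0]
  -- expand the right-hand side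
  set S : ℝ := ∫ t in (0:ℝ)..T, Real.sqrt t * a t with hS
  have hsqrtsq : (∫ t in (0:ℝ)..T, (Real.sqrt t) ^ 2) = T ^ 2 / 2 := by
    have hcongr : ∀ t ∈ Set.uIcc (0:ℝ) T, (Real.sqrt t) ^ 2 = t := by
      intro t ht
      rw [Set.uIcc_of_le hT.le] at ht
      exact Real.sq_sqrt ht.1
    rw [intervalIntegral.integral_congr hcongr, integral_id]
    ring
  have hexpand : (∫ t in (0:ℝ)..T, (a t + M * (Real.sqrt t * F)) ^ 2)
      = F ^ 2 + 2 * M * F * S + M ^ 2 * F ^ 2 * (T ^ 2 / 2) := by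
    have hpt : ∀ t : ℝ, (a t + M * (Real.sqrt t * F)) ^ 2
        = a t ^ 2 + 2 * M * F * (Real.sqrt t * a t)
          + M ^ 2 * F ^ 2 * (Real.sqrt t) ^ 2 := by
      intro t; ring
    simp_rw [hpt]
    have I2 : IntervalIntegrable (fun t => 2 * M * F * (Real.sqrt t * a t)) volume 0 T :=
      (continuous_const.mul (Real.continuous_sqrt.mul hac)).intervalIntegrable 0 T
    have I3 : IntervalIntegrable (fun t => M ^ 2 * F ^ 2 * (Real.sqrt t) ^ 2) volume 0 T :=
      (continuous_const.mul (Real.continuous_sqrt.pow 2)).intervalIntegrable 0 T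
    rw [intervalIntegral.integral_add (hIa2T.add I2) I3, intervalIntegral.integral_add hIa2T I2,
      intervalIntegral.integral_const_mul, intervalIntegral.integral_const_mul,
      hsqrtsq, ← hF2, ← hS]
  -- bound S via Cauchy–Schwarz
  have hs2 : Real.sqrt 2 ^ 2 = 2 := Real.sq_sqrt (by norm_num)
  have hs2pos : (0:ℝ) < Real.sqrt 2 := Real.sqrt_pos.mpr (by norm_num)
  have hSnn : 0 ≤ S :=
    intervalIntegral.integral_nonneg hT.le
      (fun u _ => mul_nonneg (Real.sqrt_nonneg _) (ha_nn u))
  have hSbd : Real.sqrt 2 * S ≤ T * F := by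
    have h1 := interval_cauchy_schwarz (fun t => Real.sqrt t) a
      Real.continuous_sqrt hac T hT.le
    rw [hsqrtsq, ← hF2, ← hS] at h1
    -- h1 : S ^ 2 ≤ T ^ 2 / 2 * F ^ 2
    nlinarith [h1, hSnn, hFnn, hT.le, hs2, hs2pos, mul_nonneg hT.le hFnn,
      sq_nonneg (Real.sqrt 2 * S - T * F), sq_nonneg (Real.sqrt 2 * S + T * F)]
  -- final algebra
  have hchain : γ₀ ^ 2 * ‖x‖ ^ 2 ≤ F ^ 2 + 2 * M * F * S + M ^ 2 * F ^ 2 * (T ^ 2 / 2) :=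
    (hobs x).trans (hint2.trans_eq hexpand)
  have hgoal : (γ₀ * Real.sqrt 2 / (Real.sqrt 2 + T * M)) ^ 2 * ‖x‖ ^ 2 ≤ F ^ 2 := by
    have hdpos : (0:ℝ) < Real.sqrt 2 + T * M :=
      add_pos_of_pos_of_nonneg hs2pos (mul_nonneg hT.le hM0)
    rw [div_pow, mul_pow, hs2, div_mul_eq_mul_div, div_le_iff₀ (by positivity)]
    -- γ₀ ^ 2 * 2 * ‖x‖ ^ 2 ≤ F ^ 2 * (√2 + T M) ^ 2
    have h5 : M * F * (Real.sqrt 2 * S) ≤ M * F * (T * F) :=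
      mul_le_mul_of_nonneg_left hSbd (mul_nonneg hM0 hFnn)
    nlinarith [hchain, h5, hs2, hs2pos, mul_nonneg hM0 hFnn, hFnn,
      mul_nonneg (mul_nonneg hM0 hFnn) hSnn]
  have hTM : T * ‖C‖ * ‖K‖ = T * M := by rw [hM]; ring
  rw [hTM]
  calc (γ₀ * Real.sqrt 2 / (Real.sqrt 2 + T * M)) ^ 2 * ‖x‖ ^ 2 ≤ F ^ 2 := hgoal
    _ = ∫ s in (0:ℝ)..T, a s ^ 2 := hF2
    _ = ∫ t in (0:ℝ)..T, ‖C (exp (t • B) x)‖ ^ 2 := by simp only [ha]
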